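/- Let n ≥ 1 and let F be a functor from the opposite of the poset of subsets of Fin n (ordered by inclusion) to the category of groups such that for every nonempty I ⊆ Fin n the canonical homomorphism from F(I) to the limit of the restriction of F to the proper subsets of I is surjective (i.e. F is an n-cubic extension of groups). Put X = F(Fin n), let f_i : X → F(Fin n ∖ {i}) be the homomorphisms induced by the inclusions Fin n ∖ {i} ⊆ Fin n, let K_i = ker f_i and A = ⋂_{i ∈ Fin n} K_i, and let ⬜, ◇^I and π^I : ⬜ → ◇^I be the diamond group, the punctured diamond group and the forgetful homomorphism built from the f_i. Then the following are equivalent: (a) for every subset I ⊆ Fin n the commutator subgroup ⁅⋂_{i ∈ I} K_i, ⋂_{i ∈ Fin n ∖ I} K_i⁆ of X is trivial (where an intersection over the empty index set is X itself); (b) A is an abelian group and for every I ⊆ Fin n there exists a group isomorphism θ : ⬜ → A × ◇^I whose composite with the projection A × ◇^I → ◇^I equals π^I; (c) A is abelian and such an isomorphism θ exists for at least one I ⊆ Fin n. -/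

import Mathlib

/-- The set of `n`-fold diamonds for homomorphisms `f i : X → Y i`. -/
def diamondGrpSet {n : ℕ} {X : Type*} [Group X] {Y : Fin n → Type*}
    [∀ i, Group (Y i)] (f : ∀ i, X →* Y i) : Set (Set (Fin n) → X) :=
  {m | ∀ (i : Fin n) (J : Set (Fin n)), i ∉ J → f i (m J) = f i (m (insert i J))}

/-- The diamond group `⬜`, as a subgroup of `∏_{J ⊆ Fin n} X`. -/
def diamondSubgroup {n : ℕ} {X : Type*} [Group X] {Y : Fin n → Type*}
    [∀ i, Group (Y i)] (f : ∀ i, X →* Y i) : Subgroup (Set (Fin n) → X) where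
  carrier := diamondGrpSet f
  one_mem' := by intro i J _; rfl
  mul_mem' := by
    intro a b ha hb i J hi
    simp only [Pi.mul_apply, map_mul, ha i J hi, hb i J hi]
  inv_mem' := by
    intro a ha i J hi
    simp only [Pi.inv_apply, map_inv, ha i J hi]

/-- The set of punctured `n`-fold diamonds (the entry at `I` is missing). -/
def puncturedGrpSet {n : ℕ} {X : Type*} [Group X] {Y : Fin n → Type*}
    [∀ i, Group (Y i)] (f : ∀ i, X →* Y i) (I : Set (Fin n)) :
    Set ({J : Set (Fin n) // J ≠ I} → X) :=
  {m | ∀ (i : Fin n) (J : Set (Fin n)) (_ : i ∉ J) (hJ : J ≠ I)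
      (hJ' : insert i J ≠ I),
    f i (m ⟨J, hJ⟩) = f i (m ⟨insert i J, hJ'⟩)}

/-- The punctured diamond group `◇^I`, as a subgroup. -/
def puncturedSubgroup {n : ℕ} {X : Type*} [Group X] {Y : Fin n → Type*}
    [∀ i, Group (Y i)] (f : ∀ i, X →* Y i) (I : Set (Fin n)) :
    Subgroup ({J : Set (Fin n) // J ≠ I} → X) where
  carrier := puncturedGrpSet f I
  one_mem' := by intro i J _ hJ hJ'; rfl
  mul_mem' := by
    intro a b ha hb i J hi hJ hJ'
    simp only [Pi.mul_apply, map_mul, ha i J hi hJ hJ', hb i J hi hJ hJ']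
  inv_mem' := by
    intro a ha i J hi hJ hJ'
    simp only [Pi.inv_apply, map_inv, ha i J hi hJ hJ']

/-- The initial arrows `f i : F(Fin n) → F(Fin n ∖ {i})` of an `n`-fold arrow `F`. -/
def initialMaps {n : ℕ} (F : Set (Fin n) → Type*) [∀ I, Group (F I)]
    (φ : ∀ I J : Set (Fin n), J ⊆ I → (F I →* F J)) (i : Fin n) :
    F Set.univ →* F (Set.univ \ {i}) :=
  φ Set.univ (Set.univ \ {i}) (fun _ hx => hx.1)


namespace HCE

open scoped commutatorElement

variable {n : ℕ} {X : Type*} [Group X] {Y : Fin n → Type*} [∀ i, Group (Y i)]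

variable (f : ∀ i, X →* Y i)

/-- diamond condition in direction `i` (union form). -/
def dia (i : Fin n) (m : Set (Fin n) → X) : Prop :=
  ∀ J, f i (m J) = f i (m (J ∪ {i}))

/-- entries killed by all `f i` for `i ∉ l`. -/
def ent (l : List (Fin n)) (m : Set (Fin n) → X) : Prop :=
  ∀ i, i ∉ l → ∀ J, f i (m J) = 1

/-- difference operator in direction `i`. -/
def Dl (i : Fin n) (m : Set (Fin n) → X) : Set (Fin n) → X :=
  fun J => (m (J \ {i}))⁻¹ * m (J ∪ {i})

/-- pointwise conjugation. -/
def cnj (g m : Set (Fin n) → X) : Set (Fin n) → X := fun J => (g J)⁻¹ * m J * g J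

/-- lower shift. -/
def sl (i : Fin n) (g : Set (Fin n) → X) : Set (Fin n) → X := fun J => g (J \ {i})

/-- upper shift. -/
def su (i : Fin n) (g : Set (Fin n) → X) : Set (Fin n) → X := fun J => g (J ∪ {i})

/-- defect of `g` in direction `i`. -/
def dfc (i : Fin n) (g : Set (Fin n) → X) : Set (Fin n) → X :=
  fun J => g (J \ {i}) * (g (J ∪ {i}))⁻¹

/-- the iterated-difference evaluation. -/
def al : List (Fin n) → (Set (Fin n) → X) → X
  | [], m => m ∅
  | (i :: l), m => al l (Dl i m)

-- set identity helpers
lemma set_h1 (J : Set (Fin n)) (i k : Fin n) (h : i ≠ k) :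
    (J ∪ {i}) \ {k} = (J \ {k}) ∪ {i} := by
  ext x; by_cases hx : x = i <;> simp [hx, h] <;> tauto

lemma set_h2 (J : Set (Fin n)) (i k : Fin n) :
    (J ∪ {i}) ∪ {k} = (J ∪ {k}) ∪ {i} := by
  ext x; simp; tauto

lemma set_h3 (J : Set (Fin n)) (k : Fin n) : (J ∪ {k}) \ {k} = J \ {k} := by
  ext x; simp

lemma set_h4 (J : Set (Fin n)) (k : Fin n) : (J ∪ {k}) ∪ {k} = J ∪ {k} := by
  ext x; simp

lemma set_h5 (J : Set (Fin n)) (k : Fin n) : (J \ {k}) \ {k} = J \ {k} := by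
  ext x; simp

lemma set_h6 (J : Set (Fin n)) (k : Fin n) : (J \ {k}) ∪ {k} = J ∪ {k} := by
  ext x; by_cases hx : x = k <;> simp [hx]

variable {f}

-- dia closure lemmas
lemma dia_one (i : Fin n) : dia f i (1 : Set (Fin n) → X) := fun _ => rfl

lemma dia_mul {i : Fin n} {m m' : Set (Fin n) → X} (h : dia f i m) (h' : dia f i m') :
    dia f i (m * m') := fun J => by
  simp only [Pi.mul_apply, map_mul, h J, h' J]

lemma dia_inv {i : Fin n} {m : Set (Fin n) → X} (h : dia f i m) :
    dia f i m⁻¹ := fun J => by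
  simp only [Pi.inv_apply, map_inv, h J]

lemma dia_commutator {i : Fin n} {m m' : Set (Fin n) → X} (h : dia f i m) (h' : dia f i m')
    : dia f i (fun J => ⁅m J, m' J⁆) := fun J => by
  simp only [commutatorElement_def, map_mul, map_inv, h J, h' J]

lemma dia_cnj {i : Fin n} {g m : Set (Fin n) → X} (hg : dia f i g) (h : dia f i m) :
    dia f i (cnj g m) := fun J => by
  simp only [cnj, map_mul, map_inv, hg J, h J]

lemma dia_Dl_self (k : Fin n) (m : Set (Fin n) → X) : dia f k (Dl k m) := fun J => by
  simp only [Dl, set_h3, set_h4]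

lemma dia_Dl {i k : Fin n} (h : i ≠ k) {m : Set (Fin n) → X} (hm : dia f i m) :
    dia f i (Dl k m) := fun J => by
  simp only [Dl, map_mul, map_inv, set_h1 J i k h, set_h2 J i k]
  rw [← hm (J \ {k}), ← hm (J ∪ {k})]

lemma dia_sl_self (k : Fin n) (g : Set (Fin n) → X) : dia f k (sl k g) := fun J => by
  simp only [sl, set_h3]

lemma dia_sl {i k : Fin n} (h : i ≠ k) {g : Set (Fin n) → X} (hg : dia f i g) :
    dia f i (sl k g) := fun J => by
  simp only [sl, set_h1 J i k h]
  exact hg _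

lemma dia_sl' {i k : Fin n} {g : Set (Fin n) → X} (hg : dia f i g) :
    dia f i (sl k g) := by
  by_cases h : i = k
  · subst h; exact dia_sl_self _ g
  · exact dia_sl h hg

lemma dia_su_self (k : Fin n) (g : Set (Fin n) → X) : dia f k (su k g) := fun J => by
  simp only [su, set_h4]

lemma dia_su {i k : Fin n} (h : i ≠ k) {g : Set (Fin n) → X} (hg : dia f i g) :
    dia f i (su k g) := fun J => by
  simp only [su, set_h2 J i k]
  exact hg _

lemma dia_su' {i k : Fin n} {g : Set (Fin n) → X} (hg : dia f i g) :
    dia f i (su k g) := by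
  by_cases h : i = k
  · subst h; exact dia_su_self _ g
  · exact dia_su h hg

lemma dia_dfc_self (k : Fin n) {g : Set (Fin n) → X} (hg : dia f k g) :
    ∀ J, f k (dfc k g J) = 1 := fun J => by
  have := hg (J \ {k})
  rw [set_h6] at this
  simp only [dfc, map_mul, map_inv, this, mul_inv_cancel]

lemma dia_dfc {i k : Fin n} (h : i ≠ k) {g : Set (Fin n) → X} (hg : dia f i g) :
    dia f i (dfc k g) := fun J => by
  simp only [dfc, map_mul, map_inv, set_h1 J i k h, set_h2 J i k]
  rw [← hg (J \ {k}), ← hg (J ∪ {k})]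

lemma dia_dfc_self' (k : Fin n) (g : Set (Fin n) → X) : dia f k (dfc k g) := fun J => by
  simp only [dfc, set_h3, set_h4, set_h5]



/-- membership class at level `l` -/
def DL (f : ∀ i, X →* Y i) (l : List (Fin n)) (m : Set (Fin n) → X) : Prop :=
  (∀ i ∈ l, dia f i m) ∧ ent f l m

lemma DL_mul {l : List (Fin n)} {m m' : Set (Fin n) → X} (h : DL f l m) (h' : DL f l m') :
    DL f l (m * m') :=
  ⟨fun i hi => dia_mul (h.1 i hi) (h'.1 i hi),
   fun i hi J => by simp only [Pi.mul_apply, map_mul, h.2 i hi J, h'.2 i hi J, one_mul]⟩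

lemma DL_cnj {l : List (Fin n)} {m g : Set (Fin n) → X} (h : DL f l m)
    (hg : ∀ i ∈ l, dia f i g) : DL f l (cnj g m) :=
  ⟨fun i hi => dia_cnj (hg i hi) (h.1 i hi),
   fun i hi J => by simp only [cnj, map_mul, map_inv, h.2 i hi J, mul_one, inv_mul_cancel]⟩

lemma DL_Dl {k : Fin n} {l : List (Fin n)} {m : Set (Fin n) → X} (h : DL f (k :: l) m) :
    DL f l (Dl k m) := by
  constructor
  · intro i hi
    by_cases hik : i = k
    · subst hik; exact dia_Dl_self _ m
    · exact dia_Dl hik (h.1 i (List.mem_cons_of_mem _ hi))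
  · intro i hi J
    by_cases hik : i = k
    · subst hik
      have := h.1 i (List.mem_cons_self) (J \ {i})
      rw [set_h6] at this
      simp only [Dl, map_mul, map_inv, this, inv_mul_cancel]
    · have hni : i ∉ k :: l := by
        simp only [List.mem_cons, not_or]; exact ⟨hik, hi⟩
      simp only [Dl, map_mul, map_inv, h.2 i hni, one_mul, inv_one]

/-- G1 : difference of product -/
lemma Dl_mul (k : Fin n) (m m' : Set (Fin n) → X) :
    Dl k (m * m') = cnj (sl k m') (Dl k m) * Dl k m' := by
  funext J
  simp only [Dl, cnj, sl, Pi.mul_apply, mul_inv_rev]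
  group

/-- G1' : difference of inverse -/
lemma Dl_inv (k : Fin n) (m : Set (Fin n) → X) :
    Dl k m⁻¹ = (cnj (sl k m⁻¹) (Dl k m))⁻¹ := by
  funext J
  simp only [Dl, cnj, sl, Pi.inv_apply, mul_inv_rev]
  group

lemma Dl_one (k : Fin n) : Dl k (1 : Set (Fin n) → X) = 1 := by
  funext J; simp [Dl]

/-- G2 : difference of conjugate -/
lemma Dl_cnj (k : Fin n) (g m : Set (Fin n) → X) :
    Dl k (cnj g m) =
      cnj (sl k g) (Dl k m * fun J => ⁅(m (J ∪ {k}))⁻¹, dfc k g J⁆) := by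
  funext J
  simp only [Dl, cnj, sl, dfc, Pi.mul_apply, commutatorElement_def, mul_inv_rev]
  group

/-- G3 : difference of a commutator diamond -/
lemma Dl_comm_diamond (k : Fin n) (u h : Set (Fin n) → X) :
    Dl k (fun J => ⁅u J, h J⁆) =
      cnj (fun J => ⁅sl k u J, sl k h J⁆)
        ((cnj (sl k u)⁻¹ fun J => ⁅Dl k u J, sl k h J⁆) *
         (cnj (sl k u * sl k h)⁻¹ fun J => ⁅Dl k u J, Dl k h J⁆) *
         (cnj (sl k u * sl k h * (sl k u)⁻¹)⁻¹ fun J => ⁅sl k u J, Dl k h J⁆)) := by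
  funext J
  simp only [Dl, cnj, sl, Pi.mul_apply, Pi.inv_apply, commutatorElement_def, mul_inv_rev]
  group



lemma cnj_mul (g x y : Set (Fin n) → X) : cnj g (x * y) = cnj g x * cnj g y := by
  funext J; simp only [cnj, Pi.mul_apply]; group

lemma cnj_inv (g x : Set (Fin n) → X) : cnj g x⁻¹ = (cnj g x)⁻¹ := by
  funext J; simp only [cnj, Pi.inv_apply, mul_inv_rev]; group

lemma cnj_one (g : Set (Fin n) → X) : cnj g 1 = 1 := by
  funext J; simp [cnj]

lemma cnj_cnj (g g' x : Set (Fin n) → X) : cnj g' (cnj g x) = cnj (g * g') x := by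
  funext J; simp only [cnj, Pi.mul_apply, mul_inv_rev]; group

lemma f_comm_one_left (i : Fin n) {a : X} (b : X) (h : f i a = 1) : f i ⁅a, b⁆ = 1 := by
  rw [map_commutatorElement, h, commutatorElement_one_left]

lemma f_comm_one_right (i : Fin n) (a : X) {b : X} (h : f i b = 1) : f i ⁅a, b⁆ = 1 := by
  rw [map_commutatorElement, h, commutatorElement_one_right]

/-- generators of the killing subgroup at level `l`. -/
def gens (f : ∀ i, X →* Y i) (l : List (Fin n)) : Set (Set (Fin n) → X) :=
  {x | ∃ u h g : Set (Fin n) → X, ∃ U V : Set (Fin n),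
    (∀ i ∈ l, dia f i u) ∧ (∀ i ∈ l, dia f i h) ∧ (∀ i ∈ l, dia f i g) ∧
    (∀ i ∈ U, ∀ J, f i (u J) = 1) ∧ (∀ i ∈ V, ∀ J, f i (h J) = 1) ∧
    (∀ i : Fin n, i ∉ l → i ∈ U ∨ i ∈ V) ∧
    x = cnj g (fun J => ⁅u J, h J⁆)}

def Nl (f : ∀ i, X →* Y i) (l : List (Fin n)) : Subgroup (Set (Fin n) → X) :=
  Subgroup.closure (gens f l)

lemma gens_cnj {l : List (Fin n)} {x : Set (Fin n) → X} (hx : x ∈ gens f l)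
    (g' : Set (Fin n) → X) (hg' : ∀ i ∈ l, dia f i g') : cnj g' x ∈ gens f l := by
  obtain ⟨u, h, g, U, V, hu, hh, hg, hU, hV, hcov, rfl⟩ := hx
  exact ⟨u, h, g * g', U, V, hu, hh,
    fun i hi => dia_mul (hg i hi) (hg' i hi), hU, hV, hcov, (cnj_cnj g g' _)⟩

lemma Nl_cnj {l : List (Fin n)} {x : Set (Fin n) → X} (hx : x ∈ Nl f l)
    {g' : Set (Fin n) → X} (hg' : ∀ i ∈ l, dia f i g') : cnj g' x ∈ Nl f l := by
  induction hx using Subgroup.closure_induction with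
  | mem y hy => exact Subgroup.subset_closure (gens_cnj hy g' hg')
  | one => rw [cnj_one]; exact one_mem _
  | mul y z _ _ hy hz => rw [cnj_mul]; exact mul_mem hy hz
  | inv y _ hy => rw [cnj_inv]; exact inv_mem hy

lemma Nl_dia {l : List (Fin n)} {x : Set (Fin n) → X} (hx : x ∈ Nl f l) :
    ∀ i ∈ l, dia f i x := by
  induction hx using Subgroup.closure_induction with
  | mem y hy =>
    obtain ⟨u, h, g, U, V, hu, hh, hg, _, _, _, rfl⟩ := hy
    exact fun i hi => dia_cnj (hg i hi) (dia_commutator (hu i hi) (hh i hi))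
  | one => exact fun i _ => dia_one i
  | mul y z _ _ hy hz => exact fun i hi => dia_mul (hy i hi) (hz i hi)
  | inv y _ hy => exact fun i hi => dia_inv (hy i hi)

lemma ent_Dl_self (k : Fin n) {u : Set (Fin n) → X} (hu : dia f k u) :
    ∀ J, f k (Dl k u J) = 1 := fun J => by
  have := hu (J \ {k}); rw [set_h6] at this
  simp only [Dl, map_mul, map_inv, this, inv_mul_cancel]

/-- key step: differences map killing subgroups down a level. -/
lemma Nl_Dl {k : Fin n} {l : List (Fin n)} {x : Set (Fin n) → X}
    (hx : x ∈ Nl f (k :: l)) : Dl k x ∈ Nl f l := by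
  induction hx using Subgroup.closure_induction with
  | mem y hy =>
    obtain ⟨u, h, g, U, V, hu, hh, hg, hU, hV, hcov, rfl⟩ := hy
    have hul : ∀ i ∈ l, dia f i u := fun i hi => hu i (List.mem_cons_of_mem _ hi)
    have hhl : ∀ i ∈ l, dia f i h := fun i hi => hh i (List.mem_cons_of_mem _ hi)
    have hgl : ∀ i ∈ l, dia f i g := fun i hi => hg i (List.mem_cons_of_mem _ hi)
    have huk : dia f k u := hu k (List.mem_cons_self)
    have hhk : dia f k h := hh k (List.mem_cons_self)
    have hgk : dia f k g := hg k (List.mem_cons_self)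
    have dDlu : ∀ i ∈ l, dia f i (Dl k u) := by
      intro i hi
      by_cases hik : i = k
      · subst hik; exact dia_Dl_self _ _
      · exact dia_Dl hik (hul i hi)
    have dDlh : ∀ i ∈ l, dia f i (Dl k h) := by
      intro i hi
      by_cases hik : i = k
      · subst hik; exact dia_Dl_self _ _
      · exact dia_Dl hik (hhl i hi)
    have dslu : ∀ i ∈ l, dia f i (sl k u) := fun i hi => dia_sl' (hul i hi)
    have dslh : ∀ i ∈ l, dia f i (sl k h) := fun i hi => dia_sl' (hhl i hi)
    have eDlu : ∀ i ∈ U ∪ {k}, ∀ J, f i (Dl k u J) = 1 := by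
      intro i hi J
      rcases hi with hi | hi
      · simp only [Dl, map_mul, map_inv, hU i hi, one_mul, inv_one]
      · rcases hi; exact ent_Dl_self k huk J
    have eDlh : ∀ i ∈ V ∪ {k}, ∀ J, f i (Dl k h J) = 1 := by
      intro i hi J
      rcases hi with hi | hi
      · simp only [Dl, map_mul, map_inv, hV i hi, one_mul, inv_one]
      · rcases hi; exact ent_Dl_self k hhk J
    have eslu : ∀ i ∈ U, ∀ J, f i (sl k u J) = 1 := fun i hi J => hU i hi _
    have eslh : ∀ i ∈ V, ∀ J, f i (sl k h J) = 1 := fun i hi J => hV i hi _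
    have covU : ∀ i : Fin n, i ∉ l → i ∈ U ∪ {k} ∨ i ∈ V := by
      intro i hi
      by_cases hik : i = k
      · exact Or.inl (Or.inr hik)
      · rcases hcov i (by simp [List.mem_cons, hik, hi]) with h' | h'
        · exact Or.inl (Or.inl h')
        · exact Or.inr h'
    have covV : ∀ i : Fin n, i ∉ l → i ∈ U ∨ i ∈ V ∪ {k} := by
      intro i hi
      by_cases hik : i = k
      · exact Or.inr (Or.inr hik)
      · rcases hcov i (by simp [List.mem_cons, hik, hi]) with h' | h'
        · exact Or.inl h'
        · exact Or.inr (Or.inl h')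
    have covUV : ∀ i : Fin n, i ∉ l → i ∈ U ∪ {k} ∨ i ∈ V ∪ {k} := by
      intro i hi
      rcases covU i hi with h' | h'
      · exact Or.inl h'
      · exact Or.inr (Or.inl h')
    -- the three pieces of Dl k ⁅u,h⁆
    have hy1 : (cnj (sl k u)⁻¹ fun J => ⁅Dl k u J, sl k h J⁆) ∈ Nl f l :=
      Subgroup.subset_closure ⟨Dl k u, sl k h, (sl k u)⁻¹, U ∪ {k}, V,
        dDlu, dslh, fun i hi => dia_inv (dslu i hi), eDlu, eslh, covU, rfl⟩
    have hy2 : (cnj (sl k u * sl k h)⁻¹ fun J => ⁅Dl k u J, Dl k h J⁆) ∈ Nl f l :=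
      Subgroup.subset_closure ⟨Dl k u, Dl k h, (sl k u * sl k h)⁻¹, U ∪ {k}, V ∪ {k},
        dDlu, dDlh, fun i hi => dia_inv (dia_mul (dslu i hi) (dslh i hi)),
        eDlu, eDlh, covUV, rfl⟩
    have hy3 : (cnj (sl k u * sl k h * (sl k u)⁻¹)⁻¹ fun J => ⁅sl k u J, Dl k h J⁆) ∈ Nl f l :=
      Subgroup.subset_closure ⟨sl k u, Dl k h, (sl k u * sl k h * (sl k u)⁻¹)⁻¹, U, V ∪ {k},
        dslu, dDlh,
        fun i hi => dia_inv (dia_mul (dia_mul (dslu i hi) (dslh i hi)) (dia_inv (dslu i hi))),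
        eslu, eDlh, covV, rfl⟩
    have hw : Dl k (fun J => ⁅u J, h J⁆) ∈ Nl f l := by
      rw [Dl_comm_diamond]
      exact Nl_cnj (mul_mem (mul_mem hy1 hy2) hy3)
        (fun i hi => dia_commutator (dslu i hi) (dslh i hi))
    have hcom : (fun J => ⁅((fun J => ⁅u J, h J⁆) (J ∪ {k}))⁻¹, dfc k g J⁆) ∈ Nl f l := by
      refine Subgroup.subset_closure ⟨(su k (fun J => ⁅u J, h J⁆))⁻¹, dfc k g, 1, U ∪ V, {k},
        ?_, ?_, fun i _ => dia_one i, ?_, ?_, ?_, ?_⟩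
      · exact fun i hi => dia_inv (dia_su' (dia_commutator (hul i hi) (hhl i hi)))
      · intro i hi
        by_cases hik : i = k
        · subst hik; exact dia_dfc_self' _ _
        · exact dia_dfc hik (hgl i hi)
      · intro i hi J
        simp only [Pi.inv_apply, su, map_inv, inv_eq_one]
        rcases hi with hi | hi
        · exact f_comm_one_left i _ (hU i hi _)
        · exact f_comm_one_right i _ (hV i hi _)
      · intro i hi J
        rcases hi; exact dia_dfc_self k hgk J
      · intro i hi
        by_cases hik : i = k
        · exact Or.inr hik
        · rcases hcov i (by simp [List.mem_cons, hik, hi]) with h' | h'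
          · exact Or.inl (Or.inl h')
          · exact Or.inl (Or.inr h')
      · funext J
        simp only [cnj, Pi.one_apply, inv_one, one_mul, mul_one, Pi.inv_apply, su]
    rw [Dl_cnj]
    refine Nl_cnj (mul_mem hw hcom) (fun i hi => dia_sl' (hgl i hi))
  | one => rw [Dl_one]; exact one_mem _
  | mul y z hy hz hy' hz' =>
    rw [Dl_mul]
    refine mul_mem (Nl_cnj hy' ?_) hz'
    exact fun i hi => dia_sl' (Nl_dia hz i (List.mem_cons_of_mem _ hi))
  | inv y hy hy' =>
    rw [Dl_inv]
    refine inv_mem (Nl_cnj hy' ?_)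
    exact fun i hi => dia_sl' (dia_inv (Nl_dia hy i (List.mem_cons_of_mem _ hi)))



section CC
variable (hC : ∀ (U : Set (Fin n)) (a b : X),
  (∀ i ∈ U, f i a = 1) → (∀ i, i ∉ U → f i b = 1) → a * b = b * a)

include hC

/-- (Z) : the killing subgroup is killed by `al`. -/
lemma al_Nl : ∀ (l : List (Fin n)) (x : Set (Fin n) → X), x ∈ Nl f l → al l x = 1 := by
  intro l
  induction l with
  | nil =>
    intro x hx
    induction hx using Subgroup.closure_induction with
    | mem y hy =>
      obtain ⟨u, h, g, U, V, _, _, _, hU, hV, hcov, rfl⟩ := hy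
      have hcomm : u ∅ * h ∅ = h ∅ * u ∅ := by
        refine hC U (u ∅) (h ∅) (fun i hi => hU i hi ∅) (fun i hi => ?_)
        rcases hcov i (List.not_mem_nil) with h' | h'
        · exact absurd h' hi
        · exact hV i h' ∅
      show (g ∅)⁻¹ * ⁅u ∅, h ∅⁆ * g ∅ = 1
      rw [commutatorElement_eq_one_iff_mul_comm.mpr hcomm]
      group
    | one => rfl
    | mul y z _ _ hy hz =>
      simp only [al] at hy hz ⊢
      show y ∅ * z ∅ = 1
      rw [hy, hz, one_mul]
    | inv y _ hy =>
      simp only [al] at hy ⊢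
      show (y ∅)⁻¹ = 1
      rw [hy, inv_one]
  | cons k l ih =>
    intro x hx
    exact ih _ (Nl_Dl hx)

/-- (A) and (B) : `al` is multiplicative and conjugation-invariant. -/
lemma al_mul_cnj : ∀ l : List (Fin n),
    (∀ m m' : Set (Fin n) → X, DL f l m → DL f l m' → al l (m * m') = al l m * al l m') ∧
    (∀ m g : Set (Fin n) → X, DL f l m → (∀ i ∈ l, dia f i g) → al l (cnj g m) = al l m) := by
  intro l
  induction l with
  | nil =>
    constructor
    · intro m m' _ _; rfl
    · intro m g hm _
      show (g ∅)⁻¹ * m ∅ * g ∅ = m ∅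
      have : m ∅ * g ∅ = g ∅ * m ∅ :=
        hC Set.univ (m ∅) (g ∅) (fun i _ => hm.2 i (List.not_mem_nil) ∅)
          (fun i hi => absurd (Set.mem_univ i) hi)
      rw [mul_assoc, this]
      group
  | cons k l ih =>
    have dall : ∀ (m : Set (Fin n) → X), DL f (k :: l) m → ∀ i ∈ l, dia f i m :=
      fun m hm i hi => hm.1 i (List.mem_cons_of_mem _ hi)
    constructor
    · intro m m' hm hm'
      show al l (Dl k (m * m')) = al l (Dl k m) * al l (Dl k m')
      rw [Dl_mul]
      rw [ih.1 _ _ (DL_cnj (DL_Dl hm) (fun i hi => dia_sl' (dall m' hm' i hi))) (DL_Dl hm')]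
      rw [ih.2 _ _ (DL_Dl hm) (fun i hi => dia_sl' (dall m' hm' i hi))]
    · intro m g hm hg
      show al l (Dl k (cnj g m)) = al l (Dl k m)
      rw [Dl_cnj]
      have hgl : ∀ i ∈ l, dia f i g := fun i hi => hg i (List.mem_cons_of_mem _ hi)
      have hgk : dia f k g := hg k (List.mem_cons_self)
      have hcom : DL f l (fun J => ⁅(m (J ∪ {k}))⁻¹, dfc k g J⁆) := by
        constructor
        · intro i hi
          refine dia_commutator (dia_inv (dia_su' (dall m hm i hi))) ?_
          by_cases hik : i = k
          · subst hik; exact dia_dfc_self' _ _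
          · exact dia_dfc hik (hgl i hi)
        · intro i hi J
          by_cases hik : i = k
          · subst hik
            exact f_comm_one_right i _ (dia_dfc_self i hgk J)
          · refine f_comm_one_left i _ ?_
            have : i ∉ k :: l := by simp [List.mem_cons, hik, hi]
            rw [map_inv, hm.2 i this, inv_one]
      rw [ih.2 _ _ (DL_mul (DL_Dl hm) hcom) (fun i hi => dia_sl' (hgl i hi))]
      rw [ih.1 _ _ (DL_Dl hm) hcom]
      have : al l (fun J => ⁅(m (J ∪ {k}))⁻¹, dfc k g J⁆) = 1 := by
        refine al_Nl hC l _ (Subgroup.subset_closure ?_)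
        refine ⟨(su k m)⁻¹, dfc k g, 1, {i | i ∉ (k :: l)}, {k},
          fun i hi => dia_inv (dia_su' (dall m hm i hi)), ?_, fun i _ => dia_one i,
          ?_, ?_, ?_, ?_⟩
        · intro i hi
          by_cases hik : i = k
          · subst hik; exact dia_dfc_self' _ _
          · exact dia_dfc hik (hgl i hi)
        · intro i hi J
          simp only [Pi.inv_apply, su, map_inv, inv_eq_one]
          exact hm.2 i hi _
        · intro i hi J
          rcases hi; exact dia_dfc_self k hgk J
        · intro i hi
          by_cases hik : i = k
          · exact Or.inr hik
          · exact Or.inl (by simp [List.mem_cons, hik, hi])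
        · funext J
          simp only [cnj, Pi.one_apply, inv_one, one_mul, mul_one, Pi.inv_apply, su]
      rw [this, mul_one]

lemma al_mul {l : List (Fin n)} {m m' : Set (Fin n) → X} (hm : DL f l m) (hm' : DL f l m') :
    al l (m * m') = al l m * al l m' := (al_mul_cnj hC l).1 m m' hm hm'

end CC

lemma al_ker : ∀ (l : List (Fin n)) (m : Set (Fin n) → X), DL f l m →
    ∀ i, f i (al l m) = 1 := by
  intro l
  induction l with
  | nil => intro m hm i; exact hm.2 i (List.not_mem_nil) ∅
  | cons k l ih => intro m hm i; exact ih _ (DL_Dl hm) i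



open Classical in
/-- partial indicator family. -/
noncomputable def chi (l : List (Fin n)) (S : Set (Fin n)) (c : X) : Set (Fin n) → X :=
  fun J => if (∀ i ∈ l, (i ∈ J ↔ i ∈ S)) then c else 1

open Classical in
lemma Dl_chi {k : Fin n} {l : List (Fin n)} (hk : k ∉ l) (S : Set (Fin n)) (c : X) :
    Dl k (chi (k :: l) S c) = chi l S (if k ∈ S then c else c⁻¹) := by
  classical
  funext J
  simp only [Dl, chi]
  by_cases hkS : k ∈ S
  · simp only [hkS, if_true]
    have h1 : ¬ (∀ i ∈ k :: l, (i ∈ J \ {k} ↔ i ∈ S)) := by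
      intro hcon
      have := (hcon k (List.mem_cons_self)).mpr hkS
      simp at this
    have h2 : (∀ i ∈ k :: l, (i ∈ J ∪ {k} ↔ i ∈ S)) ↔ (∀ i ∈ l, (i ∈ J ↔ i ∈ S)) := by
      constructor
      · intro hcon i hi
        have hik : i ≠ k := fun h => hk (h ▸ hi)
        have := hcon i (List.mem_cons_of_mem _ hi)
        simpa [hik] using this
      · intro hcon
        intro i hi
        rcases List.mem_cons.mp hi with rfl | hi
        · simp [hkS]
        · have hik : i ≠ k := fun h => hk (h ▸ hi)
          simpa [hik] using hcon i hi
      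
    rw [if_neg h1]
    by_cases h3 : (∀ i ∈ l, (i ∈ J ↔ i ∈ S))
    · rw [if_pos (h2.mpr h3), if_pos h3, inv_one, one_mul]
    · rw [if_neg (fun hc => h3 (h2.mp hc)), if_neg h3, inv_one, one_mul]
  · simp only [hkS, if_false]
    have h1 : ¬ (∀ i ∈ k :: l, (i ∈ J ∪ {k} ↔ i ∈ S)) := by
      intro hcon
      exact hkS ((hcon k (List.mem_cons_self)).mp (Or.inr rfl))
    have h2 : (∀ i ∈ k :: l, (i ∈ J \ {k} ↔ i ∈ S)) ↔ (∀ i ∈ l, (i ∈ J ↔ i ∈ S)) := by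
      constructor
      · intro hcon i hi
        have hik : i ≠ k := fun h => hk (h ▸ hi)
        have := hcon i (List.mem_cons_of_mem _ hi)
        simpa [hik] using this
      · intro hcon i hi
        rcases List.mem_cons.mp hi with rfl | hi
        · simp [hkS]
        · have hik : i ≠ k := fun h => hk (h ▸ hi)
          simpa [hik] using hcon i hi
    rw [if_neg h1, mul_one]
    by_cases h3 : (∀ i ∈ l, (i ∈ J ↔ i ∈ S))
    · rw [if_pos (h2.mpr h3), if_pos h3]
    · rw [if_neg (fun hc => h3 (h2.mp hc)), if_neg h3, inv_one]

open Classical in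
lemma al_chi : ∀ (l : List (Fin n)), l.Nodup → ∀ S : Set (Fin n),
    ∃ p : Bool, ∀ c : X, al l (chi l S c) = if p then c else c⁻¹ := by
  intro l
  induction l with
  | nil =>
    intro _ S
    refine ⟨true, fun c => ?_⟩
    show chi [] S c ∅ = c
    simp [chi]
  | cons k l ih =>
    intro hnd S
    obtain ⟨p, hp⟩ := ih (List.Nodup.of_cons hnd) S
    classical
    by_cases hkS : k ∈ S
    · refine ⟨p, fun c => ?_⟩
      show al l (Dl k (chi (k :: l) S c)) = _
      rw [Dl_chi (List.Nodup.notMem hnd) S c, if_pos hkS, hp c]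
    · refine ⟨!p, fun c => ?_⟩
      show al l (Dl k (chi (k :: l) S c)) = _
      rw [Dl_chi (List.Nodup.notMem hnd) S c, if_neg hkS, hp c⁻¹]
      cases p <;> simp

open Classical in
lemma chi_full (S : Set (Fin n)) (c : X) :
    chi (List.finRange n) S c = fun J => if J = S then c else 1 := by
  classical
  funext J
  simp only [chi]
  by_cases h : J = S
  · rw [if_pos h, if_pos (fun i _ => by rw [h])]
  · rw [if_neg h, if_neg (fun hc => h (Set.ext fun i => hc i (List.mem_finRange i)))]

lemma DL_full {m : Set (Fin n) → X} (hm : ∀ i, dia f i m) : DL f (List.finRange n) m :=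
  ⟨fun i _ => hm i, fun i hi => absurd (List.mem_finRange i) hi⟩

lemma dia_of_diamond {m : Set (Fin n) → X} (hm : m ∈ diamondGrpSet f) (i : Fin n) :
    dia f i m := by
  intro J
  by_cases hiJ : i ∈ J
  · have : J ∪ {i} = J := by
      ext x; simp only [Set.mem_union, Set.mem_singleton_iff]
      exact ⟨fun h => h.elim id (fun hx => hx ▸ hiJ), Or.inl⟩
    rw [this]
  · have : J ∪ {i} = insert i J := by
      ext x; simp [Set.mem_insert_iff, or_comm]
    rw [this]
    exact hm i J hiJ

lemma diamond_of_dia {m : Set (Fin n) → X} (hm : ∀ i, dia f i m) :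
    m ∈ diamondGrpSet f := by
  intro i J hiJ
  have : insert i J = J ∪ {i} := by ext x; simp [Set.mem_insert_iff, or_comm]
  rw [this]
  exact hm i J

/-- entries of a diamond supported at a single set lie in all kernels. -/
lemma ker_of_single {m : Set (Fin n) → X} (hm : m ∈ diamondGrpSet f) {I : Set (Fin n)}
    (h1 : ∀ J, J ≠ I → m J = 1) (i : Fin n) : f i (m I) = 1 := by
  by_cases hiI : i ∈ I
  · have hd := dia_of_diamond hm i (I \ {i})
    have e1 : (I \ {i}) ∪ {i} = I := by
      ext x
      by_cases hx : x = i <;> simp [hx, hiI] <;> tauto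
    rw [e1] at hd
    have e2 : I \ {i} ≠ I := by
      intro hc
      have : i ∈ I \ {i} := hc.symm ▸ hiI
      simp at this
    rw [h1 _ e2, map_one] at hd
    exact hd.symm
  · have hd := dia_of_diamond hm i I
    have e2 : I ∪ {i} ≠ I := by
      intro hc
      exact hiI (hc ▸ Or.inr rfl : i ∈ I)
    rw [h1 _ e2, map_one] at hd
    exact hd



variable {I : Set (Fin n)}

open Classical in
/-- entries of a punctured diamond reindexed by symmetric difference with `I`. -/
noncomputable def Efun (d : {J : Set (Fin n) // J ≠ I} → X) : Set (Fin n) → X :=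
  fun T => if h : symmDiff I T = I then 1 else d ⟨symmDiff I T, h⟩

lemma symmDiff_ne (T : Set (Fin n)) (hT : T ≠ ∅) : symmDiff I T ≠ I := by
  intro hc
  exact hT (by simpa using symmDiff_eq_left.mp hc)

/-- toggle lemma for punctured diamonds. -/
lemma Efun_toggle {d : {J : Set (Fin n) // J ≠ I} → X}
    (hd : ∀ (i : Fin n) (J : Set (Fin n)) (_ : i ∉ J) (hJ : J ≠ I) (hJ' : insert i J ≠ I),
      f i (d ⟨J, hJ⟩) = f i (d ⟨insert i J, hJ'⟩))
    (T : Set (Fin n)) (hT : T ≠ ∅) (i : Fin n) (hiT : i ∉ T) :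
    f i (Efun d T) = f i (Efun d (T ∪ {i})) := by
  classical
  have hT' : T ∪ {i} ≠ ∅ := by
    intro hc
    have : i ∈ (∅ : Set (Fin n)) := hc ▸ (Or.inr rfl : i ∈ T ∪ {i})
    exact this
  have hP : symmDiff I T ≠ I := symmDiff_ne T hT
  have hQ : symmDiff I (T ∪ {i}) ≠ I := symmDiff_ne _ hT'
  rw [Efun, Efun, dif_neg hP, dif_neg hQ]
  by_cases hiI : i ∈ I
  · -- i ∈ P := I ∆ T ; Q = P \ {i}
    have hiP : i ∈ symmDiff I T := by
      simp [Set.mem_symmDiff, hiI, hiT]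
    have hQP : symmDiff I (T ∪ {i}) = symmDiff I T \ {i} := by
      ext x
      by_cases hx : x = i <;>
        simp [Set.mem_symmDiff, hx, hiI, hiT] <;> tauto
    have hins : insert i (symmDiff I T \ {i}) = symmDiff I T := by
      ext x
      by_cases hx : x = i <;> simp [hx, hiP] <;> tauto
    have hQ' : symmDiff I T \ {i} ≠ I := hQP ▸ hQ
    have := hd i (symmDiff I T \ {i}) (by simp) hQ' (hins.symm ▸ hP)
    -- this : f i (d ⟨P \ {i}, _⟩) = f i (d ⟨insert i (P \ {i}) = P, _⟩)
    have e2 : d ⟨insert i (symmDiff I T \ {i}), hins.symm ▸ hP⟩ = d ⟨symmDiff I T, hP⟩ := by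
      congr 1
      exact Subtype.ext hins
    have e3 : d ⟨symmDiff I (T ∪ {i}), hQ⟩ = d ⟨symmDiff I T \ {i}, hQ'⟩ := by
      congr 1
      exact Subtype.ext hQP
    rw [e3, this, e2]
  · have hiP : i ∉ symmDiff I T := by
      simp [Set.mem_symmDiff, hiI, hiT]
    have hQP : symmDiff I (T ∪ {i}) = insert i (symmDiff I T) := by
      ext x
      by_cases hx : x = i <;>
        simp [Set.mem_symmDiff, hx, hiI, hiT] <;> tauto
    have e3 : d ⟨symmDiff I (T ∪ {i}), hQ⟩ = d ⟨insert i (symmDiff I T), hQP ▸ hQ⟩ := by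
      congr 1
      exact Subtype.ext hQP
    rw [e3]
    exact hd i (symmDiff I T) hiP hP (hQP ▸ hQ)

/-- the filler word. -/
noncomputable def Wl (d : {J : Set (Fin n) // J ≠ I} → X) :
    List (Fin n) → Set (Fin n) → X
  | [], _ => 1
  | (k :: l), U => Wl d l U * (Wl d l (U ∪ {k}))⁻¹ * Efun d (U ∪ {k})

/-- letterwise toggle for the filler word. -/
lemma Wl_toggle {d : {J : Set (Fin n) // J ≠ I} → X}
    (hd : ∀ (i : Fin n) (J : Set (Fin n)) (_ : i ∉ J) (hJ : J ≠ I) (hJ' : insert i J ≠ I),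
      f i (d ⟨J, hJ⟩) = f i (d ⟨insert i J, hJ'⟩)) :
    ∀ (l : List (Fin n)) (U : Set (Fin n)) (j : Fin n), j ∉ l → j ∉ U →
      f j (Wl d l U) = f j (Wl d l (U ∪ {j})) := by
  intro l
  induction l with
  | nil => intro U j _ _; rfl
  | cons k l ih =>
    intro U j hjl hjU
    have hjk : j ≠ k := fun h => hjl (h ▸ List.mem_cons_self)
    have hjl' : j ∉ l := fun h => hjl (List.mem_cons_of_mem _ h)
    show f j (Wl d l U * (Wl d l (U ∪ {k}))⁻¹ * Efun d (U ∪ {k})) = _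
    have e1 : (U ∪ {j}) ∪ {k} = (U ∪ {k}) ∪ {j} := set_h2 U j k
    have h2 : f j (Wl d l (U ∪ {k})) = f j (Wl d l ((U ∪ {k}) ∪ {j})) := by
      refine ih (U ∪ {k}) j hjl' ?_
      intro hc
      rcases hc with hc | hc
      · exact hjU hc
      · exact hjk hc
    have h3 : f j (Efun d (U ∪ {k})) = f j (Efun d ((U ∪ {k}) ∪ {j})) := by
      refine Efun_toggle hd (U ∪ {k}) ?_ j ?_
      · intro hc
        have : k ∈ (∅ : Set (Fin n)) := hc ▸ (Or.inr rfl : k ∈ U ∪ {k})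
        exact this
      · intro hc
        rcases hc with hc | hc
        · exact hjU hc
        · exact hjk hc
    show _ = f j (Wl d l (U ∪ {j}) * (Wl d l ((U ∪ {j}) ∪ {k}))⁻¹ * Efun d ((U ∪ {j}) ∪ {k}))
    simp only [map_mul, map_inv, e1]
    rw [← ih U j hjl' hjU, ← h2, ← h3]

/-- main invariant of the filler word. -/
lemma Wl_spec {d : {J : Set (Fin n) // J ≠ I} → X}
    (hd : ∀ (i : Fin n) (J : Set (Fin n)) (_ : i ∉ J) (hJ : J ≠ I) (hJ' : insert i J ≠ I),
      f i (d ⟨J, hJ⟩) = f i (d ⟨insert i J, hJ'⟩)) :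
    ∀ (l : List (Fin n)), l.Nodup → ∀ (U : Set (Fin n)), (∀ i ∈ l, i ∉ U) →
      ∀ i ∈ l, f i (Wl d l U) = f i (Efun d (U ∪ {i})) := by
  intro l
  induction l with
  | nil => intro _ U _ i hi; exact absurd hi (List.not_mem_nil)
  | cons k l ih =>
    intro hnd U hU i hi
    have hknl : k ∉ l := List.Nodup.notMem hnd
    have hnd' : l.Nodup := List.Nodup.of_cons hnd
    show f i (Wl d l U * (Wl d l (U ∪ {k}))⁻¹ * Efun d (U ∪ {k})) = _
    rcases List.mem_cons.mp hi with rfl | hil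
    · -- i = k
      have hcancel : f i (Wl d l U) = f i (Wl d l (U ∪ {i})) :=
        Wl_toggle hd l U i hknl (hU i (List.mem_cons_self))
      simp only [map_mul, map_inv, hcancel]
      group
    · have hik : i ≠ k := fun h => hknl (h ▸ hil)
      have hiU : i ∉ U := hU i (List.mem_cons_of_mem _ hil)
      have h1 : f i (Wl d l U) = f i (Efun d (U ∪ {i})) :=
        ih hnd' U (fun j hj => hU j (List.mem_cons_of_mem _ hj)) i hil
      have h2 : f i (Wl d l (U ∪ {k})) = f i (Efun d ((U ∪ {k}) ∪ {i})) := by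
        refine ih hnd' (U ∪ {k}) ?_ i hil
        intro j hj hc
        rcases hc with hc | hc
        · exact hU j (List.mem_cons_of_mem _ hj) hc
        · exact hknl (hc ▸ hj)
      have h3 : f i (Efun d (U ∪ {k})) = f i (Efun d ((U ∪ {k}) ∪ {i})) := by
        refine Efun_toggle hd (U ∪ {k}) ?_ i ?_
        · intro hc
          have : k ∈ (∅ : Set (Fin n)) := hc ▸ (Or.inr rfl : k ∈ U ∪ {k})
          exact this
        · intro hc
          rcases hc with hc | hc
          · exact hiU hc
          · exact hik hc
      simp only [map_mul, map_inv, h1, h2, h3]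
      group


open Classical in
/-- the missing entry can be filled in. -/
lemma filler_diamond {d : {J : Set (Fin n) // J ≠ I} → X}
    (hd : d ∈ puncturedGrpSet f I) :
    (fun J => if h : J = I then Wl d (List.finRange n) ∅ else d ⟨J, h⟩) ∈
      diamondGrpSet f := by
  classical
  show _ ∈ diamondGrpSet f
  set x := Wl d (List.finRange n) ∅ with hxdef
  have hx : ∀ i : Fin n, f i x = f i (Efun d ({i} : Set (Fin n))) := by
    intro i
    have := Wl_spec hd (List.finRange n) (List.nodup_finRange n) ∅
      (fun j _ => Set.notMem_empty j) i (List.mem_finRange i)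
    rwa [Set.empty_union] at this
  intro i J hiJ
  dsimp only
  by_cases hJ : J = I
  · subst hJ
    have hiI : i ∉ J := hiJ
    have hne : insert i J ≠ J := by
      intro hc
      exact hiJ (hc ▸ Set.mem_insert i J)
    rw [dif_pos rfl, dif_neg hne]
    have hsd : symmDiff J ({i} : Set (Fin n)) = insert i J := by
      ext z
      by_cases hz : z = i <;> simp [Set.mem_symmDiff, hz, hiJ] <;> tauto
    have hsne : symmDiff J ({i} : Set (Fin n)) ≠ J :=
      symmDiff_ne _ (by simp)
    rw [hx i, Efun, dif_neg hsne]
    have harg : (⟨symmDiff J ({i} : Set (Fin n)), hsne⟩ : {K : Set (Fin n) // K ≠ J}) =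
        ⟨insert i J, hne⟩ := Subtype.ext hsd
    rw [harg]
  · by_cases hJ' : insert i J = I
    · have hiI : i ∈ I := hJ' ▸ Set.mem_insert i J
      have hJI : J = I \ {i} := by
        ext z
        constructor
        · intro hz
          refine ⟨hJ' ▸ Set.mem_insert_of_mem i hz, ?_⟩
          intro hc
          rcases hc
          exact hiJ hz
        · intro hz
          rcases (hJ' ▸ hz.1 : z ∈ insert i J) with hc | hc
          · exact absurd hc hz.2
          · exact hc
      rw [dif_neg hJ, dif_pos hJ']
      have hsd : symmDiff I ({i} : Set (Fin n)) = J := by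
        rw [hJI]
        ext z
        by_cases hz : z = i <;> simp [Set.mem_symmDiff, hz, hiI] <;> tauto
      have hsne : symmDiff I ({i} : Set (Fin n)) ≠ I := symmDiff_ne _ (by simp)
      rw [hx i, Efun, dif_neg hsne]
      have : d ⟨symmDiff I ({i} : Set (Fin n)), hsne⟩ = d ⟨J, hJ⟩ := by
        congr 1
        exact Subtype.ext hsd
      rw [this]
    · rw [dif_neg hJ, dif_neg hJ']
      exact hd i J hiJ hJ hJ'

open Classical in
/-- main construction: the splitting isomorphism. -/
theorem construct
    (hC : ∀ (U : Set (Fin n)) (a b : X),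
      (∀ i ∈ U, f i a = 1) → (∀ i, i ∉ U → f i b = 1) → a * b = b * a)
    (I : Set (Fin n)) :
    ∃ θ : ↥(diamondSubgroup f) ≃* ↥(⨅ i, (f i).ker) × ↥(puncturedSubgroup f I),
      ∀ m : ↥(diamondSubgroup f),
        ((θ m).2).val = fun J : {J : Set (Fin n) // J ≠ I} => m.val J.1 := by
  classical
  have memA : ∀ a : X, (∀ i, f i a = 1) ↔ a ∈ ⨅ i, (f i).ker := by
    intro a
    simp [Subgroup.mem_iInf, MonoidHom.mem_ker]
  obtain ⟨p, hp⟩ := al_chi (X := X) (List.finRange n) (List.nodup_finRange n) I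
  set L := List.finRange n with hL
  have hmemdia : ∀ m : ↥(diamondSubgroup f), m.val ∈ diamondGrpSet f := fun m => m.2
  have hDL : ∀ m : ↥(diamondSubgroup f), DL f L m.val := fun m =>
    DL_full (fun i => dia_of_diamond (hmemdia m) i)
  have alker : ∀ m : ↥(diamondSubgroup f), ∀ i, f i (al L m.val) = 1 := fun m =>
    al_ker L m.val (hDL m)
  -- adjusted first component
  set adj : X → X := fun x => if p then x else x⁻¹ with hadj
  have adjker : ∀ a : X, (∀ i, f i a = 1) → ∀ i, f i (adj a) = 1 := by
    intro a ha i
    simp only [hadj]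
    cases p <;> simp [ha i]
  have central : ∀ a b : X, (∀ i, f i a = 1) → a * b = b * a := by
    intro a b ha
    exact hC Set.univ a b (fun i _ => ha i) (fun i hi => absurd (Set.mem_univ i) hi)
  have adjmul : ∀ a b : X, (∀ i, f i a = 1) → (∀ i, f i b = 1) →
      adj (a * b) = adj a * adj b := by
    intro a b ha hb
    simp only [hadj]
    cases p
    · simp only [Bool.false_eq_true, if_false, mul_inv_rev]
      exact central b⁻¹ a⁻¹ (fun i => by rw [map_inv, hb i, inv_one])
    · simp only [if_true]
  -- the homomorphism
  have hcond : ∀ (m : ↥(diamondSubgroup f)),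
      (fun J : {J : Set (Fin n) // J ≠ I} => m.val J.1) ∈ puncturedGrpSet f I := by
    intro m i J hiJ hJ hJ'
    exact hmemdia m i J hiJ
  set Θ : ↥(diamondSubgroup f) →* ↥(⨅ i, (f i).ker) × ↥(puncturedSubgroup f I) :=
    MonoidHom.mk' (fun m =>
      (⟨adj (al L m.val), (memA _).mp (adjker _ (alker m))⟩,
       ⟨fun J => m.val J.1, hcond m⟩))
      (by
        intro m m'
        have h1 : al L ((m * m').val) = al L m.val * al L m'.val :=
          al_mul hC (hDL m) (hDL m')
        refine Prod.ext (Subtype.ext ?_) (Subtype.ext ?_)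
        · show adj (al L ((m * m').val)) = adj (al L m.val) * adj (al L m'.val)
          rw [h1, adjmul _ _ (alker m) (alker m')]
        · rfl) with hΘ
  have Θ1 : ∀ m : ↥(diamondSubgroup f), ((Θ m).1).val = adj (al L m.val) := by
    intro m; rw [hΘ]; rfl
  have Θ2 : ∀ (m : ↥(diamondSubgroup f)) (J : {J : Set (Fin n) // J ≠ I}),
      ((Θ m).2).val J = m.val J.1 := by
    intro m J; rw [hΘ]; rfl
  have hinj : Function.Injective Θ := by
    rw [injective_iff_map_eq_one]
    intro m hm
    have h2 : ∀ J (hJ : J ≠ I), m.val J = 1 := by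
      intro J hJ
      have h := congrArg (fun z => ((z.2).val ⟨J, hJ⟩ : X)) hm
      rw [Θ2 m ⟨J, hJ⟩] at h
      simpa using h
    obtain ⟨c, hc⟩ : ∃ c, m.val I = c := ⟨_, rfl⟩
    have hval : m.val = chi L I c := by
      rw [chi_full]
      funext J
      by_cases hJ : J = I
      · rw [if_pos hJ, hJ, hc]
      · rw [if_neg hJ, h2 J hJ]
    have h3 : adj (al L m.val) = 1 := by
      have h := congrArg (fun z => ((z.1).val : X)) hm
      rw [Θ1 m] at h
      simpa using h
    have h4 : al L m.val = if p then c else c⁻¹ := by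
      rw [hval]; exact hp c
    have h5 : c = 1 := by
      rw [h4] at h3
      simp only [hadj] at h3
      cases p <;> simpa using h3
    refine Subtype.ext ?_
    rw [hval, h5]
    funext J
    simp [chi]
  have hsurj : Function.Surjective Θ := by
    rintro ⟨a, d⟩
    have hd : d.val ∈ puncturedGrpSet f I := d.2
    set x := Wl d.val L ∅ with hx
    set m₀v : Set (Fin n) → X := fun J => if h : J = I then x else d.val ⟨J, h⟩ with hm₀v
    have hm₀ : m₀v ∈ diamondGrpSet f := filler_diamond hd
    have hm₀DL : DL f L m₀v := DL_full (fun i => dia_of_diamond hm₀ i)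
    have alm₀ker : ∀ i, f i (al L m₀v) = 1 := al_ker L m₀v hm₀DL
    have haval : ∀ i, f i a.val = 1 := (memA a.val).mpr a.2
    set e : X := if p then a.val * (al L m₀v)⁻¹ else al L m₀v * a.val with he
    have heker : ∀ i, f i e = 1 := by
      intro i
      simp only [he]
      cases p <;> simp [haval i, alm₀ker i]
    set δv : Set (Fin n) → X := chi L I e with hδv
    have hδdia : ∀ i, dia f i δv := by
      intro i J
      have hall : ∀ J', f i (δv J') = 1 := by
        intro J'
        simp only [hδv, chi]
        split
        · exact heker i
        · exact map_one _
      rw [hall J, hall (J ∪ {i})]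
    have hδmem : δv ∈ diamondGrpSet f := diamond_of_dia hδdia
    have hmmem : δv * m₀v ∈ diamondSubgroup f :=
      mul_mem (hδmem : δv ∈ diamondSubgroup f) (hm₀ : m₀v ∈ diamondSubgroup f)
    refine ⟨⟨δv * m₀v, hmmem⟩, ?_⟩
    have hδfull : δv = fun J => if J = I then e else 1 := chi_full I e
    refine Prod.ext (Subtype.ext ?_) (Subtype.ext ?_)
    · show adj (al L (δv * m₀v)) = a.val
      have h1 : al L (δv * m₀v) = al L δv * al L m₀v :=
        al_mul hC (DL_full hδdia) hm₀DL
      have h2 : al L δv = if p then e else e⁻¹ := hp e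
      rw [h1, h2]
      simp only [hadj, he]
      cases p
      · simp only [Bool.false_eq_true, if_false]
        group
      · simp only [if_true]
        group
    · show (fun J : {J : Set (Fin n) // J ≠ I} => (δv * m₀v) J.1) = d.val
      funext J
      have hJne : J.1 ≠ I := J.2
      have : δv J.1 = 1 := by
        rw [hδfull]
        exact if_neg hJne
      show δv J.1 * m₀v J.1 = d.val J
      rw [this, one_mul]
      simp only [hm₀v]
      rw [dif_neg hJne]
  refine ⟨MulEquiv.ofBijective Θ ⟨hinj, hsurj⟩, fun m => rfl⟩

open Classical in
lemma upD_mem {S T : Set (Fin n)} {a : X} (ha : ∀ i, i ∈ S ∪ T → f i a = 1) :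
    (fun J => if S ⊆ J ∧ J ∩ T = ∅ then a else 1) ∈ diamondGrpSet f := by
  intro i J hiJ
  dsimp only
  by_cases h1 : S ⊆ J ∧ J ∩ T = ∅ <;>
    by_cases h2 : S ⊆ insert i J ∧ insert i J ∩ T = ∅
  · rw [if_pos h1, if_pos h2]
  · have hiT : i ∈ T := by
      by_contra hiT
      refine h2 ⟨h1.1.trans (Set.subset_insert i J), ?_⟩
      ext x
      simp only [Set.mem_inter_iff, Set.mem_insert_iff, Set.mem_empty_iff_false, iff_false,
        not_and]
      rintro (rfl | hxJ) hxT
      · exact hiT hxT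
      · have : x ∈ J ∩ T := ⟨hxJ, hxT⟩
        rw [h1.2] at this
        exact this
    rw [if_pos h1, if_neg h2, ha i (Or.inr hiT), map_one]
  · have hJT : J ∩ T = ∅ := by
      ext x
      simp only [Set.mem_inter_iff, Set.mem_empty_iff_false, iff_false, not_and]
      intro hxJ hxT
      have : x ∈ insert i J ∩ T := ⟨Set.mem_insert_of_mem i hxJ, hxT⟩
      rw [h2.2] at this
      exact this
    have hiS : i ∈ S := by
      by_contra hiS
      refine h1 ⟨?_, hJT⟩
      intro x hxS
      rcases h2.1 hxS with rfl | hxJ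
      · exact absurd hxS hiS
      · exact hxJ
    rw [if_neg h1, if_pos h2, ha i (Or.inl hiS), map_one]
  · rw [if_neg h1, if_neg h2]

open Classical in
/-- from the splitting isomorphism back to the commutator condition. -/
lemma reverse {I : Set (Fin n)}
    (hAb : ∀ a ∈ ⨅ i, (f i).ker, ∀ b ∈ ⨅ i, (f i).ker, a * b = b * a)
    (θ : ↥(diamondSubgroup f) ≃* ↥(⨅ i, (f i).ker) × ↥(puncturedSubgroup f I))
    (hθ : ∀ m : ↥(diamondSubgroup f),
      ((θ m).2).val = fun J : {J : Set (Fin n) // J ≠ I} => m.val J.1)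
    (I' : Set (Fin n)) (a b : X) (haK : ∀ i ∈ I', f i a = 1) (hbK : ∀ i ∉ I', f i b = 1) :
    a * b = b * a := by
  classical
  set mav : Set (Fin n) → X :=
    fun J => if I ∩ I' ⊆ J ∧ J ∩ (I' \ I) = ∅ then a else 1 with hmav
  set mbv : Set (Fin n) → X :=
    fun J => if I ∩ I'ᶜ ⊆ J ∧ J ∩ (I'ᶜ \ I) = ∅ then b else 1 with hmbv
  have hamem : mav ∈ diamondGrpSet f := by
    refine upD_mem ?_
    intro i hi
    rcases hi with hi | hi
    · exact haK i hi.2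
    · exact haK i hi.1
  have hbmem : mbv ∈ diamondGrpSet f := by
    refine upD_mem ?_
    intro i hi
    rcases hi with hi | hi
    · exact hbK i hi.2
    · exact hbK i hi.1
  set ma : ↥(diamondSubgroup f) := ⟨mav, hamem⟩ with hma
  set mb : ↥(diamondSubgroup f) := ⟨mbv, hbmem⟩ with hmb
  have hPaI : mav I = a := by
    rw [hmav]
    refine if_pos ⟨Set.inter_subset_left, ?_⟩
    ext x
    simp only [Set.mem_inter_iff, Set.mem_diff, Set.mem_empty_iff_false, iff_false, not_and]
    tauto
  have hPbI : mbv I = b := by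
    rw [hmbv]
    refine if_pos ⟨Set.inter_subset_left, ?_⟩
    ext x
    simp only [Set.mem_inter_iff, Set.mem_diff, Set.mem_empty_iff_false, iff_false, not_and]
    tauto
  have hoverlap : ∀ J : Set (Fin n), J ≠ I → mav J = 1 ∨ mbv J = 1 := by
    intro J hJ
    by_cases hPa : I ∩ I' ⊆ J ∧ J ∩ (I' \ I) = ∅
    · by_cases hPb : I ∩ I'ᶜ ⊆ J ∧ J ∩ (I'ᶜ \ I) = ∅
      · exfalso
        refine hJ ?_
        ext x
        constructor
        · intro hxJ
          by_contra hxI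
          by_cases hxI' : x ∈ I'
          · have : x ∈ J ∩ (I' \ I) := ⟨hxJ, hxI', hxI⟩
            rw [hPa.2] at this
            exact this
          · have : x ∈ J ∩ (I'ᶜ \ I) := ⟨hxJ, hxI', hxI⟩
            rw [hPb.2] at this
            exact this
        · intro hxI
          by_cases hxI' : x ∈ I'
          · exact hPa.1 ⟨hxI, hxI'⟩
          · exact hPb.1 ⟨hxI, hxI'⟩
      · right; rw [hmbv]; exact if_neg hPb
    · left; rw [hmav]; exact if_neg hPa
  set c : ↥(diamondSubgroup f) := ⁅ma, mb⁆ with hcc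
  have hcval : ∀ J, (c.val : Set (Fin n) → X) J = ⁅mav J, mbv J⁆ := by
    intro J
    rw [hcc]
    simp only [commutatorElement_def]
    rfl
  have hc2 : (θ c).2 = 1 := by
    have h0 : θ c = ⁅θ ma, θ mb⁆ := by rw [hcc, map_commutatorElement]
    have h1 : (θ c).2 = ⁅(θ ma).2, (θ mb).2⁆ := by
      rw [h0]; simp [commutatorElement_def]
    refine Subtype.ext ?_
    rw [h1]
    funext J
    have : (↑(⁅(θ ma).2, (θ mb).2⁆ : ↥(puncturedSubgroup f I)) :
        {J : Set (Fin n) // J ≠ I} → X) J = ⁅((θ ma).2).val J, ((θ mb).2).val J⁆ := by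
      simp only [commutatorElement_def]
      rfl
    rw [this, hθ ma, hθ mb]
    show ⁅mav J.1, mbv J.1⁆ = 1
    rcases hoverlap J.1 J.2 with h | h
    · rw [h, commutatorElement_one_left]
    · rw [h, commutatorElement_one_right]
  have hc1 : (θ c).1 = 1 := by
    have h0 : θ c = ⁅θ ma, θ mb⁆ := by rw [hcc, map_commutatorElement]
    have h1 : (θ c).1 = ⁅(θ ma).1, (θ mb).1⁆ := by
      rw [h0]; simp [commutatorElement_def]
    rw [h1]
    refine commutatorElement_eq_one_iff_mul_comm.mpr ?_
    refine Subtype.ext ?_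
    push_cast
    exact hAb _ ((θ ma).1).2 _ ((θ mb).1).2
  have hceq : c = 1 := by
    apply θ.injective
    rw [map_one]
    exact Prod.ext hc1 hc2
  have : (c.val : Set (Fin n) → X) I = 1 := by rw [hceq]; rfl
  rw [hcval I, hPaI, hPbI] at this
  exact commutatorElement_eq_one_iff_mul_comm.mp this

end HCE

/-- For an `n`-cubic extension of groups `F`, the commutator condition
`⁅⋂_{i ∈ I} K i, ⋂_{i ∉ I} K i⁆ = 1` for all `I` is equivalent to `A` being
abelian together with a group isomorphism `⬜ ≅ A × ◇^I` over `π^I`, for all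
(equivalently, for some) `I ⊆ Fin n`. -/
theorem higher_centrality_characterisation {n : ℕ} (hn : 1 ≤ n)
    (F : Set (Fin n) → Type*) [∀ I, Group (F I)]
    (φ : ∀ I J : Set (Fin n), J ⊆ I → (F I →* F J))
    (φ_id : ∀ (I : Set (Fin n)) (h : I ⊆ I), φ I I h = MonoidHom.id (F I))
    (φ_comp : ∀ (I J K : Set (Fin n)) (hJI : J ⊆ I) (hKJ : K ⊆ J) (x : F I),
      φ J K hKJ (φ I J hJI x) = φ I K (hKJ.trans hJI) x)
    (hext : ∀ I : Set (Fin n), I ≠ ∅ →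
      ∀ y : (J : Set (Fin n)) → J ⊂ I → F J,
        (∀ (J K : Set (Fin n)) (hJ : J ⊂ I) (hK : K ⊂ I) (hKJ : K ⊆ J),
          φ J K hKJ (y J hJ) = y K hK) →
        ∃ x : F I, ∀ (J : Set (Fin n)) (hJ : J ⊂ I),
          φ I J hJ.subset x = y J hJ) :
    ((∀ I : Set (Fin n),
        ⁅⨅ i ∈ I, (initialMaps F φ i).ker, ⨅ i ∈ Iᶜ, (initialMaps F φ i).ker⁆ =
          (⊥ : Subgroup (F Set.univ))) ↔
      ((∀ a ∈ ⨅ i, (initialMaps F φ i).ker, ∀ b ∈ ⨅ i, (initialMaps F φ i).ker,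
          a * b = b * a) ∧
        ∀ I : Set (Fin n),
          ∃ θ : ↥(diamondSubgroup (initialMaps F φ)) ≃*
              ↥(⨅ i, (initialMaps F φ i).ker) ×
                ↥(puncturedSubgroup (initialMaps F φ) I),
            ∀ m : ↥(diamondSubgroup (initialMaps F φ)),
              ((θ m).2).val = fun J : {J : Set (Fin n) // J ≠ I} => m.val J.1)) ∧
    ((∀ I : Set (Fin n),
        ⁅⨅ i ∈ I, (initialMaps F φ i).ker, ⨅ i ∈ Iᶜ, (initialMaps F φ i).ker⁆ =
          (⊥ : Subgroup (F Set.univ))) ↔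
      ((∀ a ∈ ⨅ i, (initialMaps F φ i).ker, ∀ b ∈ ⨅ i, (initialMaps F φ i).ker,
          a * b = b * a) ∧
        ∃ I : Set (Fin n),
          ∃ θ : ↥(diamondSubgroup (initialMaps F φ)) ≃*
              ↥(⨅ i, (initialMaps F φ i).ker) ×
                ↥(puncturedSubgroup (initialMaps F φ) I),
            ∀ m : ↥(diamondSubgroup (initialMaps F φ)),
              ((θ m).2).val = fun J : {J : Set (Fin n) // J ≠ I} => m.val J.1)) := by
  classical
  have memKI : ∀ (U : Set (Fin n)) (x : F Set.univ),
      x ∈ (⨅ i ∈ U, (initialMaps F φ i).ker) ↔ ∀ i ∈ U, initialMaps F φ i x = 1 := by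
    intro U x
    simp [Subgroup.mem_iInf, MonoidHom.mem_ker]
  have memKall : ∀ x : F Set.univ,
      x ∈ (⨅ i, (initialMaps F φ i).ker) ↔ ∀ i, initialMaps F φ i x = 1 := by
    intro x
    simp [Subgroup.mem_iInf, MonoidHom.mem_ker]
  have hdir1 :
      (∀ I : Set (Fin n),
        ⁅⨅ i ∈ I, (initialMaps F φ i).ker, ⨅ i ∈ Iᶜ, (initialMaps F φ i).ker⁆ =
          (⊥ : Subgroup (F Set.univ))) →
      ((∀ a ∈ ⨅ i, (initialMaps F φ i).ker, ∀ b ∈ ⨅ i, (initialMaps F φ i).ker,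
          a * b = b * a) ∧
        ∀ I : Set (Fin n),
          ∃ θ : ↥(diamondSubgroup (initialMaps F φ)) ≃*
              ↥(⨅ i, (initialMaps F φ i).ker) ×
                ↥(puncturedSubgroup (initialMaps F φ) I),
            ∀ m : ↥(diamondSubgroup (initialMaps F φ)),
              ((θ m).2).val = fun J : {J : Set (Fin n) // J ≠ I} => m.val J.1) := by
    intro hCC
    have hC : ∀ (U : Set (Fin n)) (a b : F Set.univ),
        (∀ i ∈ U, initialMaps F φ i a = 1) → (∀ i, i ∉ U → initialMaps F φ i b = 1) →
        a * b = b * a := by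
      intro U a b ha hb
      have haU : a ∈ ⨅ i ∈ U, (initialMaps F φ i).ker := (memKI U a).mpr ha
      have hbU : b ∈ ⨅ i ∈ Uᶜ, (initialMaps F φ i).ker :=
        (memKI Uᶜ b).mpr (fun i hi => hb i hi)
      have := Subgroup.commutator_mem_commutator haU hbU
      rw [hCC U, Subgroup.mem_bot] at this
      exact commutatorElement_eq_one_iff_mul_comm.mp this
    constructor
    · intro a ha b hb
      exact hC Set.univ a b (fun i _ => (memKall a).mp ha i)
        (fun i hi => absurd (Set.mem_univ i) hi)
    · intro I
      exact HCE.construct hC I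
  have hdir2 :
      (∀ a ∈ ⨅ i, (initialMaps F φ i).ker, ∀ b ∈ ⨅ i, (initialMaps F φ i).ker,
          a * b = b * a) →
      (∃ I : Set (Fin n),
          ∃ θ : ↥(diamondSubgroup (initialMaps F φ)) ≃*
              ↥(⨅ i, (initialMaps F φ i).ker) ×
                ↥(puncturedSubgroup (initialMaps F φ) I),
            ∀ m : ↥(diamondSubgroup (initialMaps F φ)),
              ((θ m).2).val = fun J : {J : Set (Fin n) // J ≠ I} => m.val J.1) →
      (∀ I : Set (Fin n),
        ⁅⨅ i ∈ I, (initialMaps F φ i).ker, ⨅ i ∈ Iᶜ, (initialMaps F φ i).ker⁆ =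
          (⊥ : Subgroup (F Set.univ))) := by
    rintro hAb ⟨I, θ, hθ⟩ I'
    rw [eq_bot_iff, Subgroup.commutator_le]
    intro a ha b hb
    rw [Subgroup.mem_bot]
    refine commutatorElement_eq_one_iff_mul_comm.mpr ?_
    exact HCE.reverse hAb θ hθ I' a b ((memKI I' a).mp ha)
      (fun i hi => (memKI I'ᶜ b).mp hb i hi)
  constructor
  · constructor
    · intro h
      exact ⟨(hdir1 h).1, (hdir1 h).2⟩
    · rintro ⟨hAb, hall⟩
      exact hdir2 hAb ⟨∅, hall ∅⟩
  · constructor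
    · intro h
      exact ⟨(hdir1 h).1, ∅, (hdir1 h).2 ∅⟩
    · rintro ⟨hAb, hex⟩
      exact hdir2 hAb hex
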